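/- Assume d ≥ 1 and fix an integer d₀ ≥ 1. For each fixed real s, the function α ↦ ε(α, s) is a polynomial in α of degree d + d₀, and its coefficient of α^{d+d₀-1} equals μ^{-d}·((D^{d-1}χ̃)(d)/(d-1)!)·s - (d+d₀)(d+d₀+1)/2. -/

import Mathlib

/-- Backward difference operator: `(D f)(x) = f x - f (x-1)`. -/
noncomputable def bdiff (f : ℝ → ℝ) : ℝ → ℝ := fun x => f x - f (x - 1)

/-- `d = r(r-1)a/2 + rb + r`. -/
def dInv (r a b : ℕ) : ℕ := r * (r - 1) * a / 2 + r * b + r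

/-- `p = (r-1)a + b + 2`. -/
def pInv (r a b : ℕ) : ℕ := (r - 1) * a + b + 2

/-- The function `χ̃(x) = ∏_{j=1}^r (μx - p + 1 + (j-1)a/2)_{1+b+(r-j)a}`. -/
noncomputable def chiF (r a b : ℕ) (μ : ℝ) : ℝ → ℝ := fun x =>
  ∏ j ∈ Finset.Icc 1 r,
    (ascPochhammer ℝ (1 + b + (r - j) * a)).eval
      (μ * x - (pInv r a b : ℝ) + 1 + ((j : ℝ) - 1) * a / 2)

/-- The explicit Rawnsley ε-function of the Cartan–Hartogs domain `Ω^{B^{d₀}}(μ)`: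
`ε(α,s) = μ^{-d} ∑_{k=0}^d ((D^k χ̃)(d)/k!) s^{d-k} (α-d-d₀)_{k+d₀}`,
where `s = 1 - ‖w‖²/N(z,z̄)^μ`. -/
noncomputable def eps (r a b d₀ : ℕ) (μ : ℝ) (α s : ℝ) : ℝ :=
  (1 / μ ^ dInv r a b) *
    ∑ k ∈ Finset.range (dInv r a b + 1),
      (bdiff^[k] (chiF r a b μ) (dInv r a b : ℝ) / (Nat.factorial k : ℝ)) *
        s ^ (dInv r a b - k) *
        (ascPochhammer ℝ (k + d₀)).eval (α - (dInv r a b : ℝ) - (d₀ : ℝ))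

open Polynomial

/-- Polynomial backward difference. -/
noncomputable def pdiff (P : ℝ[X]) : ℝ[X] := P - P.comp (X - 1)

lemma bdiff_polyEval (P : ℝ[X]) : bdiff (fun y => P.eval y) = fun y => (pdiff P).eval y := by
  funext y; simp [bdiff, pdiff]

lemma bdiff_iter_polyEval (k : ℕ) (P : ℝ[X]) :
    bdiff^[k] (fun y => P.eval y) = fun y => (pdiff^[k] P).eval y := by
  induction k generalizing P with
  | zero => rfl
  | succ k ih => rw [Function.iterate_succ_apply, Function.iterate_succ_apply, bdiff_polyEval, ih]

lemma pdiff_C (c : ℝ) : pdiff (C c) = 0 := by simp [pdiff]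

lemma pdiff_add (P Q : ℝ[X]) : pdiff (P + Q) = pdiff P + pdiff Q := by
  simp [pdiff, add_comp]; ring

lemma pdiff_smul (c : ℝ) (P : ℝ[X]) : pdiff (c • P) = c • pdiff P := by
  simp [pdiff, smul_comp, smul_sub]

lemma iter_pdiff_add (k : ℕ) (P Q : ℝ[X]) :
    pdiff^[k] (P + Q) = pdiff^[k] P + pdiff^[k] Q := by
  induction k generalizing P Q with
  | zero => rfl
  | succ k ih => rw [Function.iterate_succ_apply, Function.iterate_succ_apply,
      Function.iterate_succ_apply, pdiff_add, ih]

lemma iter_pdiff_smul (k : ℕ) (c : ℝ) (P : ℝ[X]) :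
    pdiff^[k] (c • P) = c • pdiff^[k] P := by
  induction k generalizing P with
  | zero => rfl
  | succ k ih => rw [Function.iterate_succ_apply, Function.iterate_succ_apply, pdiff_smul, ih]

lemma pdiff_of_natDegree_eq_zero {P : ℝ[X]} (h : P.natDegree = 0) : pdiff P = 0 := by
  rw [Polynomial.eq_C_of_natDegree_le_zero h.le, pdiff_C]

lemma X_sub_one_eq : (X - 1 : ℝ[X]) = X - C 1 := by rw [C_1]

lemma natDegree_pdiff_lt {P : ℝ[X]} (h : P.natDegree ≠ 0) :
    (pdiff P).natDegree < P.natDegree := by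
  have hP0 : P ≠ 0 := fun h0 => h (by simp [h0])
  have hq : (P.comp (X - 1 : ℝ[X])).natDegree = P.natDegree := by
    rw [natDegree_comp, X_sub_one_eq, natDegree_X_sub_C, mul_one]
  have hq0 : P.comp (X - 1 : ℝ[X]) ≠ 0 := by
    intro h0
    rw [h0, natDegree_zero] at hq
    exact h hq.symm
  have hlc : P.leadingCoeff = (P.comp (X - 1 : ℝ[X])).leadingCoeff := by
    rw [leadingCoeff_comp (by rw [X_sub_one_eq, natDegree_X_sub_C]; exact one_ne_zero)]
    rw [X_sub_one_eq, leadingCoeff_X_sub_C, one_pow, mul_one]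
  have hdeg : P.degree = (P.comp (X - 1 : ℝ[X])).degree := by
    rw [degree_eq_natDegree hP0, degree_eq_natDegree hq0, hq]
  have hlt : (pdiff P).degree < P.degree := degree_sub_lt hdeg hP0 hlc
  by_cases h0 : pdiff P = 0
  · rw [h0, natDegree_zero]; omega
  · exact natDegree_lt_natDegree h0 hlt

lemma iter_pdiff_eq_zero : ∀ (n : ℕ) (P : ℝ[X]), P.natDegree ≤ n → pdiff^[n + 1] P = 0 := by
  intro n
  induction n with
  | zero =>
    intro P h
    rw [Function.iterate_one]
    exact pdiff_of_natDegree_eq_zero (Nat.le_zero.mp h)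
  | succ n ih =>
    intro P h
    rw [Function.iterate_succ_apply]
    apply ih
    by_cases h0 : P.natDegree = 0
    · rw [pdiff_of_natDegree_eq_zero h0, natDegree_zero]; omega
    · have := natDegree_pdiff_lt h0; omega

lemma asc_eval_prod (n : ℕ) (x : ℝ) :
    (ascPochhammer ℝ n).eval x = ∏ i ∈ Finset.range n, (x + i) := by
  induction n with
  | zero => simp
  | succ n ih => rw [ascPochhammer_succ_right, Finset.prod_range_succ, ← ih]; simp

lemma pdiff_asc (n : ℕ) :
    pdiff (ascPochhammer ℝ (n + 1)) = ((n : ℝ) + 1) • ascPochhammer ℝ n := by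
  apply Polynomial.funext
  intro x
  have h1 : (ascPochhammer ℝ (n + 1)).eval x = (ascPochhammer ℝ n).eval x * (x + n) := by
    rw [ascPochhammer_succ_right]; simp
  have h2 : (ascPochhammer ℝ (n + 1)).eval (x - 1) = (x - 1) * (ascPochhammer ℝ n).eval x := by
    rw [ascPochhammer_succ_left]; simp [eval_comp]
  simp only [pdiff, eval_sub, eval_comp, eval_smul]
  simp only [eval_sub, eval_X, eval_one, h1]
  rw [h2]
  simp [smul_eq_mul]; ring

lemma iter_pdiff_asc (n : ℕ) :
    pdiff^[n] (ascPochhammer ℝ n) = C ((n.factorial : ℝ)) := by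
  induction n with
  | zero => simp [ascPochhammer_zero]
  | succ n ih =>
    rw [Function.iterate_succ_apply, pdiff_asc, iter_pdiff_smul, ih, Polynomial.smul_C]
    congr 1
    simp [Nat.factorial_succ]

lemma iter_pdiff_main : ∀ (n : ℕ) (P : ℝ[X]), P.natDegree ≤ n →
    pdiff^[n] P = C ((n.factorial : ℝ) * P.coeff n) := by
  intro n
  induction n with
  | zero =>
    intro P h
    rw [Function.iterate_zero_apply]
    conv_lhs => rw [Polynomial.eq_C_of_natDegree_le_zero h]
    simp
  | succ n ih =>
    intro P h
    set c := P.coeff (n + 1) with hc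
    have hA : (ascPochhammer ℝ (n + 1)).natDegree = n + 1 := by rw [ascPochhammer_natDegree]
    have hAc : (ascPochhammer ℝ (n + 1)).coeff (n + 1) = 1 := by
      have hm := (monic_ascPochhammer ℝ (n + 1)).coeff_natDegree
      rwa [hA] at hm
    have hQdeg : (P - C c * ascPochhammer ℝ (n + 1)).natDegree ≤ n := by
      rw [natDegree_le_iff_coeff_eq_zero]
      intro N hN
      rcases eq_or_lt_of_le (Nat.succ_le_of_lt hN) with hN1 | hN1
      · rw [coeff_sub, coeff_C_mul, ← hN1, hAc, mul_one, ← hc, sub_self]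
      · rw [coeff_sub, coeff_C_mul,
          coeff_eq_zero_of_natDegree_lt (lt_of_le_of_lt h hN1),
          coeff_eq_zero_of_natDegree_lt (by rw [hA]; exact hN1), mul_zero, sub_self]
    have hsplit : P = C c * ascPochhammer ℝ (n + 1) + (P - C c * ascPochhammer ℝ (n + 1)) := by
      ring
    conv_lhs => rw [hsplit]
    rw [iter_pdiff_add, iter_pdiff_eq_zero n _ hQdeg, add_zero, ← Polynomial.smul_eq_C_mul,
      iter_pdiff_smul, iter_pdiff_asc, Polynomial.smul_C]
    congr 1
    simp [Nat.factorial_succ]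
    ring

/-- The polynomial whose evaluation is `chiF`. -/
noncomputable def chiP (r a b : ℕ) (μ : ℝ) : ℝ[X] :=
  ∏ j ∈ Finset.Icc 1 r,
    (ascPochhammer ℝ (1 + b + (r - j) * a)).comp
      (C μ * X + C (1 + ((j : ℝ) - 1) * (a : ℝ) / 2 - (pInv r a b : ℝ)))

lemma chiF_eq (r a b : ℕ) (μ : ℝ) : chiF r a b μ = fun x => (chiP r a b μ).eval x := by
  funext x
  simp only [chiF, chiP, eval_prod, eval_comp, eval_add, eval_mul, eval_C, eval_X]
  refine Finset.prod_congr rfl fun j _ => ?_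
  congr 1
  ring

lemma sum_deg (r a b : ℕ) (hr : 1 ≤ r) :
    ∑ j ∈ Finset.Icc 1 r, (1 + b + (r - j) * a) = dInv r a b := by
  have h2 : ∑ j ∈ Finset.Icc 1 r, (r - j) = r * (r - 1) / 2 := by
    have : Finset.Icc 1 r = Finset.Ico 1 (r + 1) := by
      rw [Finset.Ico_add_one_right_eq_Icc]
    rw [this, Finset.sum_Ico_eq_sum_range]
    simp only [Nat.add_sub_cancel]
    have hre : ∀ i ∈ Finset.range r, r - (1 + i) = r - 1 - i := fun i _ => by omega
    rw [Finset.sum_congr rfl hre, Finset.sum_range_reflect (fun i => i) r]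
    exact Finset.sum_range_id r
  have h1 : ∑ j ∈ Finset.Icc 1 r, (1 + b + (r - j) * a)
      = r * (1 + b) + (∑ j ∈ Finset.Icc 1 r, (r - j)) * a := by
    rw [Finset.sum_add_distrib, Finset.sum_const, ← Finset.sum_mul, Nat.card_Icc]
    simp [Nat.smul_one_eq_cast]
  obtain ⟨t, ht⟩ := Nat.even_mul_succ_self (r - 1)
  have ht' : r * (r - 1) = 2 * t := by
    have h3 : r - 1 + 1 = r := by omega
    rw [h3] at ht
    rw [mul_comm]
    omega
  have hdiv1 : r * (r - 1) / 2 = t := by rw [ht']; omega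
  have hdiv2 : r * (r - 1) * a / 2 = t * a := by
    rw [ht', mul_assoc]
    exact Nat.mul_div_cancel_left _ (by norm_num)
  rw [h1, h2, hdiv1]
  unfold dInv
  rw [hdiv2]
  ring

lemma chiP_facts (r a b : ℕ) (hr : 1 ≤ r) (μ : ℝ) (hμ : μ ≠ 0) :
    (chiP r a b μ).natDegree = dInv r a b ∧
      (chiP r a b μ).coeff (dInv r a b) = μ ^ dInv r a b := by
  set f : ℕ → ℝ[X] := fun j =>
    (ascPochhammer ℝ (1 + b + (r - j) * a)).comp
      (C μ * X + C (1 + ((j : ℝ) - 1) * (a : ℝ) / 2 - (pInv r a b : ℝ))) with hf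
  have hdegf : ∀ j, (f j).natDegree = 1 + b + (r - j) * a := by
    intro j
    rw [hf]
    simp only []
    rw [natDegree_comp, natDegree_linear hμ, ascPochhammer_natDegree, mul_one]
  have hlcf : ∀ j, (f j).leadingCoeff = μ ^ (1 + b + (r - j) * a) := by
    intro j
    rw [hf]
    simp only []
    rw [leadingCoeff_comp (by rw [natDegree_linear hμ]; exact one_ne_zero),
      Monic.leadingCoeff (monic_ascPochhammer ℝ _), leadingCoeff_linear hμ, one_mul,
      ascPochhammer_natDegree]
  have hne : ∀ j ∈ Finset.Icc 1 r, f j ≠ 0 := by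
    intro j _
    intro h0
    have := hlcf j
    rw [h0, leadingCoeff_zero] at this
    exact pow_ne_zero _ hμ this.symm
  have hdeg : (chiP r a b μ).natDegree = dInv r a b := by
    rw [chiP, ← hf, natDegree_prod _ _ hne]
    rw [Finset.sum_congr rfl (fun j _ => hdegf j)]
    exact sum_deg r a b hr
  refine ⟨hdeg, ?_⟩
  have hlc : (chiP r a b μ).leadingCoeff = μ ^ dInv r a b := by
    rw [chiP, ← hf, leadingCoeff_prod]
    rw [Finset.prod_congr rfl (fun j _ => hlcf j), Finset.prod_pow_eq_pow_sum,
      sum_deg r a b hr]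
  conv_lhs => rw [← hdeg]
  rw [← hdeg] at hlc ⊢
  exact hlc

lemma bdiff_chi_top (r a b : ℕ) (hr : 1 ≤ r) (μ : ℝ) (hμ : μ ≠ 0) (x : ℝ) :
    bdiff^[dInv r a b] (chiF r a b μ) x
      = ((dInv r a b).factorial : ℝ) * μ ^ dInv r a b := by
  obtain ⟨hdeg, hcoeff⟩ := chiP_facts r a b hr μ hμ
  rw [chiF_eq, bdiff_iter_polyEval, iter_pdiff_main _ _ hdeg.le, hcoeff]
  simp

theorem stmt11 (r a b d₀ : ℕ) (hr : 1 ≤ r) (hd₀ : 1 ≤ d₀) (μ : ℝ) (hμ : 0 < μ)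
    (hd : 1 ≤ dInv r a b) (s : ℝ) :
    ∃ Q : Polynomial ℝ, (∀ α : ℝ, Q.eval α = eps r a b d₀ μ α s) ∧
      Q.degree = ((dInv r a b + d₀ : ℕ) : WithBot ℕ) ∧
      Q.coeff (dInv r a b + d₀ - 1) =
        (1 / μ ^ dInv r a b) *
            (bdiff^[dInv r a b - 1] (chiF r a b μ) (dInv r a b : ℝ) /
              (Nat.factorial (dInv r a b - 1) : ℝ)) * s -
          ((dInv r a b : ℝ) + (d₀ : ℝ)) * ((dInv r a b : ℝ) + (d₀ : ℝ) + 1) / 2 := by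
  have hμ' : μ ≠ 0 := ne_of_gt hμ
  set D := dInv r a b with hDdef
  obtain ⟨e, hDe⟩ : ∃ e, D = e + 1 := ⟨D - 1, by omega⟩
  set Bk : ℕ → ℝ[X] :=
    fun k => ∏ i ∈ Finset.range (k + d₀), (X - C (((D : ℝ) + (d₀ : ℝ)) - (i : ℝ))) with hBk
  set ak : ℕ → ℝ := fun k =>
    bdiff^[k] (chiF r a b μ) (D : ℝ) / (Nat.factorial k : ℝ) * s ^ (D - k) with hak
  have evalB : ∀ (k : ℕ) (α : ℝ),
      (Bk k).eval α = (ascPochhammer ℝ (k + d₀)).eval (α - (D : ℝ) - (d₀ : ℝ)) := by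
    intro k α
    rw [asc_eval_prod]
    simp only [hBk, eval_prod, eval_sub, eval_X, eval_C]
    exact Finset.prod_congr rfl fun i _ => by ring
  have hBmonic : ∀ k, (Bk k).Monic :=
    fun k => monic_prod_of_monic _ _ fun i _ => monic_X_sub_C _
  have hBdeg : ∀ k, (Bk k).natDegree = k + d₀ := by
    intro k
    rw [hBk]
    rw [natDegree_prod_of_monic _ _ fun i _ => monic_X_sub_C _,
      Finset.sum_congr rfl fun i _ => natDegree_X_sub_C _]
    simp
  have haD : ak D = μ ^ D := by
    rw [hak]
    simp only []
    rw [bdiff_chi_top r a b hr μ hμ', Nat.sub_self, pow_zero, mul_one]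
    rw [mul_div_assoc]
    field_simp
    rfl
  refine ⟨C (1 / μ ^ D) * ∑ k ∈ Finset.range (D + 1), C (ak k) * Bk k, ?_, ?_, ?_⟩
  · intro α
    rw [eval_mul, eval_C, Polynomial.eval_finset_sum]
    show _ = eps r a b d₀ μ α s
    simp only [eps]
    rw [← hDdef]
    congr 1
    refine Finset.sum_congr rfl fun k _ => ?_
    rw [eval_mul, eval_C, evalB]
  · have hTcoeff : (∑ k ∈ Finset.range (D + 1), C (ak k) * Bk k).coeff (D + d₀) = ak D := by
      rw [finset_sum_coeff]
      rw [Finset.sum_eq_single D]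
      · rw [coeff_C_mul]
        have : (Bk D).coeff (D + d₀) = 1 := by
          rw [← hBdeg D]
          exact (hBmonic D).coeff_natDegree
        rw [this, mul_one]
      · intro k hk hne
        have hk' : k < D := by
          simp only [Finset.mem_range] at hk
          omega
        rw [coeff_C_mul, coeff_eq_zero_of_natDegree_lt (by rw [hBdeg]; omega), mul_zero]
      · intro h
        exact absurd (Finset.self_mem_range_succ D) h
    have hTdeg : (∑ k ∈ Finset.range (D + 1), C (ak k) * Bk k).natDegree ≤ D + d₀ := by
      refine natDegree_sum_le_of_forall_le _ _ fun k hk => ?_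
      refine le_trans (natDegree_C_mul_le _ _) ?_
      rw [hBdeg]
      simp only [Finset.mem_range] at hk
      omega
    have hQdeg : (C (1 / μ ^ D) * ∑ k ∈ Finset.range (D + 1), C (ak k) * Bk k).degree
        ≤ ((D + d₀ : ℕ) : WithBot ℕ) := by
      refine natDegree_le_iff_degree_le.mp ?_
      exact le_trans (natDegree_C_mul_le _ _) hTdeg
    refine degree_eq_of_le_of_coeff_ne_zero hQdeg ?_
    rw [coeff_C_mul, hTcoeff, haD]
    field_simp
    norm_num
  · rw [hDe]
    have hm : e + 1 + d₀ - 1 = e + d₀ := by omega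
    rw [hm, coeff_C_mul, finset_sum_coeff, Finset.sum_range_succ, Finset.sum_range_succ]
    have hsmall : ∀ k ∈ Finset.range e, (C (ak k) * Bk k).coeff (e + d₀) = 0 := by
      intro k hk
      simp only [Finset.mem_range] at hk
      rw [coeff_C_mul, coeff_eq_zero_of_natDegree_lt (by rw [hBdeg]; omega), mul_zero]
    rw [Finset.sum_eq_zero hsmall, zero_add]
    have hcoef_e : (Bk e).coeff (e + d₀) = 1 := by
      rw [← hBdeg e]
      exact (hBmonic e).coeff_natDegree
    have hcoef_D : (Bk (e + 1)).coeff (e + d₀)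
        = -∑ i ∈ Finset.range (e + 1 + d₀), (((D : ℝ) + (d₀ : ℝ)) - (i : ℝ)) := by
      have hpos : 0 < (Bk (e + 1)).natDegree := by rw [hBdeg]; omega
      have hidx : e + d₀ = (Bk (e + 1)).natDegree - 1 := by rw [hBdeg]; omega
      rw [hidx, ← nextCoeff_of_natDegree_pos hpos, hBk]
      exact prod_X_sub_C_nextCoeff _
    have hDe' : (D : ℝ) = (e : ℝ) + 1 := by rw [hDe]; push_cast; ring
    have hsum : ∑ i ∈ Finset.range (e + 1 + d₀), (((D : ℝ) + (d₀ : ℝ)) - (i : ℝ))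
        = ((e : ℝ) + 1 + (d₀ : ℝ)) * ((e : ℝ) + 2 + (d₀ : ℝ)) / 2 := by
      rw [Finset.sum_sub_distrib, Finset.sum_const, Finset.card_range, nsmul_eq_mul]
      have hgauss := Finset.sum_range_id_mul_two (e + 1 + d₀)
      have hsub : e + 1 + d₀ - 1 = e + d₀ := by omega
      rw [hsub] at hgauss
      have hcast := congrArg (Nat.cast : ℕ → ℝ) hgauss
      push_cast at hcast
      rw [hDe']
      push_cast
      linear_combination - hcast / 2
    have haD' : ak (e + 1) = μ ^ (e + 1) := by rw [← hDe]; exact haD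
    have hake : ak e = bdiff^[e] (chiF r a b μ) ((e : ℝ) + 1) / (Nat.factorial e : ℝ) * s := by
      simp only [hak]
      rw [hDe']
      have hs1 : D - e = 1 := by omega
      rw [hs1, pow_one]
    rw [coeff_C_mul, coeff_C_mul, hcoef_e, hcoef_D, hsum, haD', hake, mul_one]
    have hμp : μ ^ (e + 1) ≠ 0 := pow_ne_zero _ hμ'
    push_cast
    field_simp
    ring
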